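/- Let X be a real Banach space with a normalized 1-unconditional basis (e_i)_{i∈ℕ} with biorthogonal functionals (e*_i)_{i∈ℕ}, and let x ∈ S_X be a Daugavet-point. Then for every nonempty finite set E ⊆ ℕ with ‖Σ_{i∈E} e_i‖ = 1 one has ‖x − P_E x‖ = 1. -/

import Mathlib

noncomputable section

variable {X : Type*} [NormedAddCommGroup X] [NormedSpace ℝ X]

/-- `(e, f)` is a normalized 1-unconditional basis of `X` with biorthogonal functionals `f`. -/
structure IsUncondBasis (e : ℕ → X) (f : ℕ → X →L[ℝ] ℝ) : Prop where
  norm_e : ∀ i, ‖e i‖ = 1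
  biorth : ∀ i j, f i (e j) = if i = j then (1 : ℝ) else 0
  expand : ∀ x : X, HasSum (fun i => f i x • e i) x
  signs : ∀ (x : X) (θ : ℕ → ℝ), (∀ i, θ i = 1 ∨ θ i = -1) →
    ∃ y : X, HasSum (fun i => θ i • f i x • e i) y ∧ ‖y‖ = ‖x‖

/-- `Δ_ε(x)`: the set of elements of the closed unit ball that are at distance
at least `2 - ε` from `x`. -/
def deltaSet (x : X) (ε : ℝ) : Set X :=
  {y | ‖y‖ ≤ 1 ∧ 2 - ε ≤ ‖x - y‖}

/-- `x` is a Daugavet-point if for every `ε > 0` the closed unit ball equals the closed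
convex hull of `Δ_ε(x)`. -/
def IsDaugavetPoint (x : X) : Prop :=
  ∀ ε : ℝ, 0 < ε → Metric.closedBall (0 : X) 1 = closure (convexHull ℝ (deltaSet x ε))

/-- Flipping the signs of finitely many coordinates preserves the norm. -/
lemma flip_norm (e : ℕ → X) (f : ℕ → X →L[ℝ] ℝ) (hb : IsUncondBasis e f)
    (F : Finset ℕ) (w : X) :
    ‖w - ∑ i ∈ F, (2 * f i w) • e i‖ = ‖w‖ := by
  classical
  obtain ⟨y, hy, hny⟩ := hb.signs w (fun i => if i ∈ F then -1 else 1)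
    (fun i => by by_cases h : i ∈ F <;> simp [h])
  have h0 : HasSum (fun i => if i ∈ F then (2 * f i w) • e i else 0)
      (∑ i ∈ F, (2 * f i w) • e i) := by
    have h2 := hasSum_sum_of_ne_finset_zero (s := F) (L := SummationFilter.unconditional ℕ)
      (f := fun i => if i ∈ F then (2 * f i w) • e i else 0) (fun i hi => if_neg hi)
    rwa [Finset.sum_congr rfl (fun i hi => if_pos hi)] at h2
  have h1 := (hb.expand w).sub h0
  have hfun : (fun i => (if i ∈ F then (-1 : ℝ) else 1) • f i w • e i)
      = fun i => f i w • e i - (if i ∈ F then (2 * f i w) • e i else 0) := by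
    funext i
    by_cases h : i ∈ F
    · simp only [if_pos h, neg_one_smul]
      rw [two_mul, add_smul]
      abel
    · simp [if_neg h]
  rw [hfun] at hy
  rw [← hy.unique h1]
  exact hny

/-- Each coordinate functional has norm at most one. -/
lemma coord_le_norm (e : ℕ → X) (f : ℕ → X →L[ℝ] ℝ) (hb : IsUncondBasis e f)
    (k : ℕ) (w : X) : |f k w| ≤ ‖w‖ := by
  classical
  obtain ⟨y, hy, hny⟩ := hb.signs w (fun i => if i = k then 1 else -1)
    (fun i => by by_cases h : i = k <;> simp [h])
  have h1 := (hb.expand w).add hy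
  have hfun : (fun i => f i w • e i + (if i = k then (1:ℝ) else -1) • f i w • e i)
      = fun i => if i = k then (2 * f k w) • e k else 0 := by
    funext i
    by_cases h : i = k
    · subst h
      rw [if_pos rfl, if_pos rfl, one_smul, two_mul, add_smul]
    · rw [if_neg h, if_neg h, neg_one_smul]
      abel
  rw [hfun] at h1
  have h2 : HasSum (fun i => if i = k then (2 * f k w) • e k else 0) ((2 * f k w) • e k) :=
    hasSum_ite_eq k _
  have h3 : w + y = (2 * f k w) • e k := h1.unique h2
  have h4 : ‖(2 * f k w) • e k‖ = 2 * |f k w| := by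
    rw [norm_smul, hb.norm_e, Real.norm_eq_abs, abs_mul, mul_one]
    norm_num
  have h5 : ‖w + y‖ ≤ ‖w‖ + ‖y‖ := norm_add_le _ _
  rw [h3, h4, hny] at h5
  linarith

/-- Deleting finitely many coordinates does not increase the norm. -/
lemma suppress_le (e : ℕ → X) (f : ℕ → X →L[ℝ] ℝ) (hb : IsUncondBasis e f)
    (F : Finset ℕ) (w : X) :
    ‖w - ∑ i ∈ F, f i w • e i‖ ≤ ‖w‖ := by
  have hA := flip_norm e f hb F w
  have key : w - ∑ i ∈ F, f i w • e i
      = (1/2 : ℝ) • w + (1/2 : ℝ) • (w - ∑ i ∈ F, (2 * f i w) • e i) := by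
    have hterm : ∀ i ∈ F, (1/2 : ℝ) • (2 * f i w) • e i = f i w • e i := fun i _ => by
      rw [smul_smul, show (1/2 : ℝ) * (2 * f i w) = f i w by ring]
    rw [smul_sub, Finset.smul_sum, Finset.sum_congr rfl hterm, ← add_sub_assoc, ← add_smul]
    norm_num
  rw [key]
  calc ‖(1/2 : ℝ) • w + (1/2 : ℝ) • (w - ∑ i ∈ F, (2 * f i w) • e i)‖
      ≤ ‖(1/2 : ℝ) • w‖ + ‖(1/2 : ℝ) • (w - ∑ i ∈ F, (2 * f i w) • e i)‖ := norm_add_le _ _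
    _ = (1/2) * ‖w‖ + (1/2) * ‖w‖ := by
        rw [norm_smul, norm_smul, hA, Real.norm_eq_abs,
          abs_of_pos (by norm_num : (0:ℝ) < 1/2)]
    _ = ‖w‖ := by ring

/-- Scaling one coordinate by a factor `1 - c` with `c ∈ [0,2]` does not increase the norm. -/
lemma scale_coord (e : ℕ → X) (f : ℕ → X →L[ℝ] ℝ) (hb : IsUncondBasis e f)
    (k : ℕ) (w : X) (c : ℝ) (h0 : 0 ≤ c) (h2 : c ≤ 2) :
    ‖w - (c * f k w) • e k‖ ≤ ‖w‖ := by
  have hA : ‖w - (2 * f k w) • e k‖ = ‖w‖ := by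
    simpa using flip_norm e f hb {k} w
  have key : w - (c * f k w) • e k
      = (1 - c/2) • w + (c/2) • (w - (2 * f k w) • e k) := by
    rw [smul_sub, smul_smul, ← add_sub_assoc, ← add_smul]
    rw [show (1 - c/2) + c/2 = 1 by ring, one_smul,
      show c/2 * (2 * f k w) = c * f k w by ring]
  rw [key]
  calc ‖(1 - c/2) • w + (c/2) • (w - (2 * f k w) • e k)‖
      ≤ ‖(1 - c/2) • w‖ + ‖(c/2) • (w - (2 * f k w) • e k)‖ := norm_add_le _ _
    _ = (1 - c/2) * ‖w‖ + (c/2) * ‖w‖ := by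
        rw [norm_smul, norm_smul, hA, Real.norm_eq_abs, Real.norm_eq_abs,
          abs_of_nonneg (by linarith : (0:ℝ) ≤ 1 - c/2), abs_of_nonneg (by linarith : (0:ℝ) ≤ c/2)]
    _ = ‖w‖ := by ring

/-- Lattice monotonicity: if `|f i u| ≤ f i v` coordinatewise, then `‖u‖ ≤ ‖v‖`. -/
lemma mono_norm (e : ℕ → X) (f : ℕ → X →L[ℝ] ℝ) (hb : IsUncondBasis e f)
    (u v : X) (h : ∀ i, |f i u| ≤ f i v) : ‖u‖ ≤ ‖v‖ := by
  classical
  have hbound : ∀ F : Finset ℕ, ‖v + ∑ i ∈ F, (f i u - f i v) • e i‖ ≤ ‖v‖ := by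
    intro F
    induction F using Finset.induction_on with
    | empty => simp
    | @insert k F hkF ih =>
      set W := v + ∑ i ∈ F, (f i u - f i v) • e i with hW
      have hcoordW : f k W = f k v := by
        rw [hW, map_add, map_sum]
        rw [Finset.sum_eq_zero (fun i hi => by
          rw [map_smul, hb.biorth, if_neg (fun hh => hkF (by rw [hh]; exact hi)), smul_zero])]
        rw [add_zero]
      rw [Finset.sum_insert hkF]
      have heq : v + ((f k u - f k v) • e k + ∑ i ∈ F, (f i u - f i v) • e i)
          = W + (f k u - f k v) • e k := by
        rw [hW]; abel
      rw [heq]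
      by_cases hv0 : f k v = 0
      · have hu0 : f k u = 0 := by
          have h1 := h k
          rw [hv0] at h1
          exact abs_eq_zero.mp (le_antisymm h1 (abs_nonneg _))
        rw [hu0, hv0]
        simpa using ih
      · have hvpos : 0 < f k v := lt_of_le_of_ne (le_trans (abs_nonneg _) (h k)) (Ne.symm hv0)
        have habs := abs_le.mp (h k)
        set c := (f k v - f k u) / f k v with hc
        have hc0 : 0 ≤ c := div_nonneg (by linarith [habs.2, le_abs_self (f k u)]) hvpos.le
        have hc2 : c ≤ 2 := by
          rw [hc, div_le_iff₀ hvpos]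
          linarith [habs.1, neg_abs_le (f k u)]
        have hcfk : c * f k W = f k v - f k u := by
          rw [hcoordW, hc, div_mul_cancel₀ _ hv0]
        have harg : W + (f k u - f k v) • e k = W - (c * f k W) • e k := by
          have hneg : (f k u - f k v) • e k = -((f k v - f k u) • e k) := by
            rw [← neg_smul, neg_sub]
          rw [hcfk, hneg, ← sub_eq_add_neg]
        rw [harg]
        exact le_trans (scale_coord e f hb k W c hc0 hc2) ih
  have hsum : HasSum (fun i => (f i u - f i v) • e i) (u - v) := by
    have h1 := (hb.expand u).sub (hb.expand v)
    simpa only [sub_smul] using h1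
  have ht : Filter.Tendsto (fun F : Finset ℕ => ∑ i ∈ F, (f i u - f i v) • e i)
      Filter.atTop (nhds (u - v)) := hsum
  have htend : Filter.Tendsto (fun F : Finset ℕ => v + ∑ i ∈ F, (f i u - f i v) • e i)
      Filter.atTop (nhds u) := by
    have h2 := ht.const_add v
    simpa using h2
  exact le_of_tendsto htend.norm (Filter.Eventually.of_forall hbound)

/-- If `x` is a Daugavet-point of the unit sphere of a Banach space with a normalized
1-unconditional basis, then `‖x - P_E x‖ = 1` for every nonempty finite set `E ⊆ ℕ`
with `‖∑_{i ∈ E} e_i‖ = 1`. -/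
theorem daugavetPoint_norm_sub_finite_proj [CompleteSpace X] (e : ℕ → X) (f : ℕ → X →L[ℝ] ℝ)
    (hb : IsUncondBasis e f) (x : X) (hx : ‖x‖ = 1) (hD : IsDaugavetPoint x)
    (E : Finset ℕ) (hE : E.Nonempty) (hEnorm : ‖∑ i ∈ E, e i‖ = 1) :
    ‖x - ∑ i ∈ E, f i x • e i‖ = 1 := by
  classical
  set P : X := ∑ i ∈ E, f i x • e i with hP
  have hcoordx : ∀ k, |f k x| ≤ 1 := fun k => hx ▸ coord_le_norm e f hb k x
  have hNle : ‖x - P‖ ≤ 1 := hx ▸ suppress_le e f hb E x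
  have hχ : ∀ j, f j (∑ i ∈ E, e i) = if j ∈ E then (1:ℝ) else 0 := by
    intro j
    rw [map_sum]
    simp only [hb.biorth]
    exact Finset.sum_ite_eq E j (fun _ => (1:ℝ))
  have hPco : ∀ j, f j P = if j ∈ E then f j x else 0 := by
    intro j
    rw [hP, map_sum]
    simp only [map_smul, smul_eq_mul, hb.biorth, mul_ite, mul_one, mul_zero]
    exact Finset.sum_ite_eq E j (fun i => f i x)
  have key : ∀ ε : ℝ, 0 < ε → ε < 1 → 2 - ε ≤ ‖x - P‖ + 1 + 2*ε := by
    intro ε hε hε1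
    set s : ℕ → ℝ := fun i => if 0 ≤ f i x then 1 else -1 with hs
    have hspm : ∀ i, s i = 1 ∨ s i = -1 := fun i => by
      by_cases h : 0 ≤ f i x <;> simp [hs, h]
    have hs1 : ∀ i, |s i| = 1 := fun i => by rcases hspm i with h | h <;> simp [h]
    obtain ⟨b, hbsum, hbnorm⟩ := hb.signs (∑ i ∈ E, e i) s hspm
    have hbnorm1 : ‖b‖ = 1 := by rw [hbnorm, hEnorm]
    have hbeq : b = ∑ i ∈ E, s i • e i := by
      have h0 : (fun i => s i • f i (∑ j ∈ E, e j) • e i)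
          = fun i => if i ∈ E then s i • e i else 0 := by
        funext i
        rw [hχ i]
        by_cases h : i ∈ E <;> simp [h]
      rw [h0] at hbsum
      have h1 : HasSum (fun i => if i ∈ E then s i • e i else 0) (∑ i ∈ E, s i • e i) := by
        have h2 := hasSum_sum_of_ne_finset_zero (s := E) (L := SummationFilter.unconditional ℕ)
          (f := fun i => if i ∈ E then s i • e i else 0) (fun i hi => if_neg hi)
        rwa [Finset.sum_congr rfl (fun i hi => if_pos hi)] at h2
      exact hbsum.unique h1
    set G : X →L[ℝ] ℝ := ∑ i ∈ E, s i • f i with hG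
    have hGapp : ∀ v : X, G v = ∑ i ∈ E, s i * f i v := by
      intro v
      rw [hG]
      simp [ContinuousLinearMap.sum_apply]
    have hGb : G b = (E.card : ℝ) := by
      rw [hGapp, hbeq]
      have hterm : ∀ i ∈ E, s i * f i (∑ j ∈ E, s j • e j) = 1 := by
        intro i hi
        rw [map_sum]
        simp only [map_smul, smul_eq_mul, hb.biorth, mul_ite, mul_one, mul_zero]
        rw [Finset.sum_ite_eq E i (fun j => s j), if_pos hi]
        rcases hspm i with h | h <;> rw [h] <;> norm_num
      rw [Finset.sum_congr rfl hterm, Finset.sum_const, nsmul_eq_mul, mul_one]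
    obtain ⟨z, hzΔ, hGz⟩ : ∃ z ∈ deltaSet x ε, (E.card : ℝ) - ε < G z := by
      by_contra hcon
      push_neg at hcon
      have hsub : deltaSet x ε ⊆ {v : X | G v ≤ (E.card:ℝ) - ε} := fun v hv => hcon v hv
      have hconv : Convex ℝ {v : X | G v ≤ (E.card:ℝ) - ε} :=
        convex_halfSpace_le ⟨fun a b => G.map_add a b, fun c a => G.map_smul c a⟩ _
      have hcl : IsClosed {v : X | G v ≤ (E.card:ℝ) - ε} :=
        isClosed_le G.continuous continuous_const
      have hbmem : b ∈ Metric.closedBall (0:X) 1 := by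
        simp [Metric.mem_closedBall, dist_zero_right, hbnorm1]
      rw [hD ε hε] at hbmem
      have hfin : G b ≤ (E.card:ℝ) - ε :=
        closure_minimal (convexHull_min hsub hconv) hcl hbmem
      rw [hGb] at hfin
      linarith
    obtain ⟨hz1, hz2⟩ := hzΔ
    have hzco : ∀ k, |f k z| ≤ 1 := fun k => le_trans (coord_le_norm e f hb k z) hz1
    have hterm1 : ∀ j, s j * f j z ≤ 1 := fun j =>
      le_trans (le_abs_self _) (by rw [abs_mul, hs1, one_mul]; exact hzco j)
    have hpinch : ∀ k ∈ E, 1 - ε < s k * f k z := by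
      intro k hk
      have hsplit : G z = s k * f k z + ∑ j ∈ E.erase k, s j * f j z := by
        rw [hGapp, ← Finset.add_sum_erase E _ hk]
      have hbound : ∑ j ∈ E.erase k, s j * f j z ≤ ((E.erase k).card : ℝ) := by
        calc ∑ j ∈ E.erase k, s j * f j z ≤ ∑ j ∈ E.erase k, 1 :=
              Finset.sum_le_sum (fun j _ => hterm1 j)
          _ = ((E.erase k).card : ℝ) := by rw [Finset.sum_const, nsmul_eq_mul, mul_one]
      have hcard : ((E.erase k).card : ℝ) = (E.card : ℝ) - 1 := by
        rw [Finset.card_erase_of_mem hk,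
          Nat.cast_sub (Finset.one_le_card.mpr ⟨k, hk⟩), Nat.cast_one]
      rw [hcard] at hbound
      linarith [hGz, hsplit]
    have habsz : ∀ k ∈ E, 1 - ε ≤ |f k z| := by
      intro k hk
      refine le_trans (hpinch k hk).le ?_
      exact le_trans (le_abs_self _) (le_of_eq (by rw [abs_mul, hs1, one_mul]))
    have hdiff : ∀ k ∈ E, |f k x - f k z| ≤ 1 := by
      intro k hk
      have h1 := hpinch k hk
      have h2 := abs_le.mp (hzco k)
      have h3 := abs_le.mp (hcoordx k)
      by_cases hsk : 0 ≤ f k x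
      · have hskv : s k = 1 := by simp only [hs]; rw [if_pos hsk]
        rw [hskv, one_mul] at h1
        rw [abs_le]
        constructor <;> linarith
      · have hskv : s k = -1 := by simp only [hs]; rw [if_neg hsk]
        rw [hskv, neg_one_mul] at h1
        push_neg at hsk
        rw [abs_le]
        constructor <;> linarith
    -- build |z|
    set θz : ℕ → ℝ := fun i => if f i z < 0 then -1 else 1 with hθz
    obtain ⟨az, hazsum, haznorm⟩ := hb.signs z θz
      (fun i => by by_cases h : f i z < 0 <;> simp [hθz, h])
    have hazco : ∀ j, f j az = |f j z| := by
      intro j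
      have h1 : HasSum (fun i => f j (θz i • f i z • e i)) (f j az) := (f j).hasSum hazsum
      have h2 : (fun i => f j (θz i • f i z • e i))
          = fun i => if i = j then θz j * f j z else 0 := by
        funext i
        rw [map_smul, map_smul, hb.biorth]
        by_cases h : i = j
        · subst h
          simp
        · rw [if_neg (fun hh => h hh.symm), if_neg h]
          simp
      rw [h2] at h1
      have h3 : HasSum (fun i => if i = j then θz j * f j z else 0) (θz j * f j z) :=
        hasSum_ite_eq j _
      rw [h1.unique h3]
      by_cases h : f j z < 0
      · simp only [hθz]
        rw [if_pos h, abs_of_neg h]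
        ring
      · simp only [hθz]
        rw [if_neg h, abs_of_nonneg (not_lt.mp h), one_mul]
    set v : X := az + (2*ε) • ∑ i ∈ E, e i with hv
    have hvnorm : ‖v‖ ≤ 1 + 2*ε := by
      calc ‖v‖ ≤ ‖az‖ + ‖(2*ε) • ∑ i ∈ E, e i‖ := norm_add_le _ _
        _ = ‖z‖ + (2*ε) * 1 := by
            rw [haznorm, norm_smul, hEnorm, Real.norm_eq_abs,
              abs_of_nonneg (by linarith : (0:ℝ) ≤ 2*ε)]
        _ ≤ 1 + 2*ε := by linarith
    have hvco : ∀ j, f j v = |f j z| + (if j ∈ E then 2*ε else 0) := by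
      intro j
      rw [hv, map_add, map_smul, hχ j, hazco j, smul_eq_mul]
      split_ifs <;> ring
    have hu : ‖P - z‖ ≤ ‖v‖ := by
      apply mono_norm e f hb
      intro j
      rw [map_sub, hPco j, hvco j]
      by_cases hj : j ∈ E
      · rw [if_pos hj, if_pos hj]
        have hd := hdiff j hj
        have ha := habsz j hj
        linarith
      · rw [if_neg hj, if_neg hj, zero_sub, abs_neg, add_zero]
    have htri : ‖x - z‖ ≤ ‖x - P‖ + ‖P - z‖ := by
      calc ‖x - z‖ = ‖(x - P) + (P - z)‖ := by rw [sub_add_sub_cancel]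
        _ ≤ ‖x - P‖ + ‖P - z‖ := norm_add_le _ _
    linarith [hz2, hu, hvnorm, htri]
  have hNge : 1 ≤ ‖x - P‖ := by
    by_contra hlt
    push_neg at hlt
    have h0 : 0 ≤ ‖x - P‖ := norm_nonneg _
    have h1 : 0 < (1 - ‖x - P‖)/4 := by linarith
    have h2 : (1 - ‖x - P‖)/4 < 1 := by linarith
    have h3 := key ((1 - ‖x - P‖)/4) h1 h2
    linarith
  exact le_antisymm hNle hNge
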